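/- Let N ≥ 2 be an even natural number, let φ*_N = sgn(sin(2·θ*_N)) · π/(4N), and for φ ∈ ℝ let θ(φ) = ((N−1)/(N+1))·φ + θ*_N, φ' = φ·N/2, and θ' = θ(φ) − ((N−2)/2)·φ. Then for every φ lying between 0 and φ*_N inclusive, the pair (φ', θ') belongs to the set ℱ. -/

import Mathlib

open Real

set_option maxHeartbeats 1000000

/-- The set `𝒢 = (π/4, π/2) ∪ (π/2, 3π/4) ∪ (5π/4, 3π/2) ∪ (3π/2, 7π/4)`. -/
noncomputable def Gset : Set ℝ :=
  Set.Ioo (π / 4) (π / 2) ∪ Set.Ioo (π / 2) (3 * π / 4)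
    ∪ Set.Ioo (5 * π / 4) (3 * π / 2) ∪ Set.Ioo (3 * π / 2) (7 * π / 4)

/-- The set `ℱ = ((−π/4, π/4) × 𝒢) ∪ (((−π/4, π/4) \ {0}) × {π/2, 3π/2}) ⊆ ℝ²`. -/
noncomputable def Fset : Set (ℝ × ℝ) :=
  (Set.Ioo (-(π / 4)) (π / 4) ×ˢ Gset)
    ∪ ((Set.Ioo (-(π / 4)) (π / 4) \ {0}) ×ˢ ({π / 2, 3 * π / 2} : Set ℝ))

/-- The value `t_N` defined, for even `N`, according to `N mod 8`. -/
noncomputable def tval (N : ℕ) : ℝ :=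
  if N % 8 = 2 then (N : ℝ) / 4 + 1 / 2
  else if N % 8 = 4 then (N : ℝ) / 4
  else if N % 8 = 6 then 3 * (N : ℝ) / 4 + 1 / 2
  else 3 * (N : ℝ) / 4 + 1

/-- The angle `θ*_N = 2π t_N/(N+1)`. -/
noncomputable def thetaStar (N : ℕ) : ℝ := 2 * π * tval N / ((N : ℝ) + 1)

/-- Proposition 7: for even `N ≥ 2`, `φ*_N = sgn(sin(2θ*_N))·π/(4N)`,
`θ(φ) = ((N−1)/(N+1))φ + θ*_N`, `φ' = φN/2` and `θ' = θ(φ) − ((N−2)/2)φ`, the pair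
`(φ', θ')` belongs to `ℱ` for every `φ` between `0` and `φ*_N` inclusive. -/
theorem shifted_angles_mem_Fset (N : ℕ) (hN : 2 ≤ N) (hNeven : N % 2 = 0)
    (φstar : ℝ) (hφstar : φstar = Real.sign (sin (2 * thetaStar N)) * (π / (4 * (N : ℝ))))
    (φ : ℝ) (hφ : φ ∈ Set.uIcc 0 φstar) :
    (φ * (N : ℝ) / 2,
      (((N : ℝ) - 1) / ((N : ℝ) + 1)) * φ + thetaStar N - (((N : ℝ) - 2) / 2) * φ)
      ∈ Fset := by
  have hx2 : (2:ℝ) ≤ (N:ℝ) := by exact_mod_cast hN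
  set x := (N:ℝ) with hxdef
  have hx0 : (0:ℝ) < x := by linarith
  have hx1 : (0:ℝ) < x + 1 := by linarith
  have h40 : (0:ℝ) < 4 * x := by linarith
  have h2x1 : (0:ℝ) < 2 * (x + 1) := by linarith
  have hyp : 0 < π / (x + 1) := div_pos pi_pos hx1
  have hyl : π / (x + 1) < π := by
    rw [div_lt_iff₀ hx1]; nlinarith [pi_pos]
  have hsinpos := Real.sin_pos_of_pos_of_lt_pi hyp hyl
  have hcases : N % 8 = 2 ∨ N % 8 = 4 ∨ N % 8 = 6 ∨ N % 8 = 0 := by omega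
  simp only [Fset, Gset, Set.mem_union, Set.mem_prod, Set.mem_Ioo]
  rcases hcases with hmod | hmod | hmod | hmod
  · -- N % 8 = 2 : θ* = π/2 + π/(2(x+1)), φ* = -π/(4x)
    have htv : tval N = x / 4 + 1 / 2 := by simp [tval, hmod, hxdef]
    have hθ : thetaStar N = π / 2 + π / (2 * (x + 1)) := by
      rw [thetaStar, htv]; field_simp; ring
    have hsin : sin (2 * thetaStar N) < 0 := by
      have h2θ : 2 * thetaStar N = π / (x + 1) + π := by rw [hθ]; field_simp; ring
      rw [h2θ, Real.sin_add_pi]; linarith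
    have hφs : φstar = -(π / (4 * x)) := by
      rw [hφstar, Real.sign_of_neg hsin]; ring
    have hφsneg : φstar ≤ 0 := by
      have : 0 ≤ π / (4 * x) := le_of_lt (div_pos pi_pos h40)
      rw [hφs]; linarith
    rw [Set.uIcc_of_ge hφsneg] at hφ
    obtain ⟨hlo, hhi⟩ := hφ
    have h4 : -π ≤ φ * (4 * x) := by
      have : -π / (4 * x) ≤ φ := by rw [neg_div, ← hφs]; exact hlo
      exact (div_le_iff₀ h40).mp this
    have key : ((x - 1) / (x + 1)) * φ + thetaStar N - ((x - 2) / 2) * φ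
        = π / 2 + (π + x * (3 - x) * φ) / (2 * (x + 1)) := by
      rw [hθ]; field_simp; ring
    refine Or.inl ⟨⟨?_, ?_⟩, ?_⟩
    · nlinarith [pi_pos]
    · nlinarith [pi_pos, mul_nonneg (neg_nonneg.mpr hhi) hx0.le]
    · refine Or.inl (Or.inl (Or.inr ?_))
      rw [key]
      constructor
      · have hQ : 0 < π + x * (3 - x) * φ := by
          nlinarith [h4, mul_nonneg (mul_nonneg hx0.le hx0.le) (neg_nonneg.mpr hhi)]
        have := div_pos hQ h2x1
        linarith
      · have hQ : (π + x * (3 - x) * φ) / (2 * (x + 1)) < π / 4 := by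
          rw [div_lt_iff₀ h2x1]
          nlinarith [mul_nonneg (by linarith : (0:ℝ) ≤ π + φ * (4 * x))
              (by linarith : (0:ℝ) ≤ x - 2),
            mul_nonneg (neg_nonneg.mpr hhi) hx0.le, pi_pos]
        linarith
  · -- N % 8 = 4 : θ* = π/2 - π/(2(x+1)), φ* = π/(4x)
    have hx4 : (4:ℝ) ≤ x := by
      rw [hxdef]
      exact_mod_cast (by omega : 4 ≤ N)
    have htv : tval N = x / 4 := by simp [tval, hmod, hxdef]
    have hθ : thetaStar N = π / 2 - π / (2 * (x + 1)) := by
      rw [thetaStar, htv]; field_simp; ring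
    have hsin : 0 < sin (2 * thetaStar N) := by
      have h2θ : 2 * thetaStar N = π - π / (x + 1) := by rw [hθ]; field_simp
      rw [h2θ, Real.sin_pi_sub]; exact hsinpos
    have hφs : φstar = π / (4 * x) := by
      rw [hφstar, Real.sign_of_pos hsin]; ring
    have hφspos : 0 ≤ φstar := by
      rw [hφs]; exact le_of_lt (div_pos pi_pos h40)
    rw [Set.uIcc_of_le hφspos] at hφ
    obtain ⟨hlo, hhi⟩ := hφ
    have h4 : φ * (4 * x) ≤ π := by
      have : φ ≤ π / (4 * x) := hφs ▸ hhi
      exact (le_div_iff₀ h40).mp this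
    have key : ((x - 1) / (x + 1)) * φ + thetaStar N - ((x - 2) / 2) * φ
        = π / 2 + (-π + x * (3 - x) * φ) / (2 * (x + 1)) := by
      rw [hθ]; field_simp; ring
    refine Or.inl ⟨⟨?_, ?_⟩, ?_⟩
    · nlinarith [pi_pos, mul_nonneg hlo hx0.le]
    · nlinarith [pi_pos]
    · refine Or.inl (Or.inl (Or.inl ?_))
      rw [key]
      constructor
      · have hQ : -(π / 4) < (-π + x * (3 - x) * φ) / (2 * (x + 1)) := by
          rw [lt_div_iff₀ h2x1]
          nlinarith [mul_nonneg (by linarith : (0:ℝ) ≤ π - φ * (4 * x))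
              (by linarith : (0:ℝ) ≤ x - 3),
            mul_nonneg hlo hx0.le, pi_pos]
        linarith
      · have hQ : (-π + x * (3 - x) * φ) / (2 * (x + 1)) < 0 := by
          apply div_neg_of_neg_of_pos _ h2x1
          nlinarith [mul_nonneg hlo hx0.le, pi_pos]
        linarith
  · -- N % 8 = 6 : θ* = 3π/2 - π/(2(x+1)), φ* = π/(4x)
    have hx6 : (6:ℝ) ≤ x := by
      rw [hxdef]
      exact_mod_cast (by omega : 6 ≤ N)
    have htv : tval N = 3 * x / 4 + 1 / 2 := by simp [tval, hmod, hxdef]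
    have hθ : thetaStar N = 3 * π / 2 - π / (2 * (x + 1)) := by
      rw [thetaStar, htv]; field_simp; ring
    have hsin : 0 < sin (2 * thetaStar N) := by
      have h2θ : 2 * thetaStar N = (π - π / (x + 1)) + 2 * π := by
        rw [hθ]; field_simp; ring
      rw [h2θ, Real.sin_add_two_pi, Real.sin_pi_sub]; exact hsinpos
    have hφs : φstar = π / (4 * x) := by
      rw [hφstar, Real.sign_of_pos hsin]; ring
    have hφspos : 0 ≤ φstar := by
      rw [hφs]; exact le_of_lt (div_pos pi_pos h40)
    rw [Set.uIcc_of_le hφspos] at hφ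
    obtain ⟨hlo, hhi⟩ := hφ
    have h4 : φ * (4 * x) ≤ π := by
      have : φ ≤ π / (4 * x) := hφs ▸ hhi
      exact (le_div_iff₀ h40).mp this
    have key : ((x - 1) / (x + 1)) * φ + thetaStar N - ((x - 2) / 2) * φ
        = 3 * π / 2 + (-π + x * (3 - x) * φ) / (2 * (x + 1)) := by
      rw [hθ]; field_simp; ring
    refine Or.inl ⟨⟨?_, ?_⟩, ?_⟩
    · nlinarith [pi_pos, mul_nonneg hlo hx0.le]
    · nlinarith [pi_pos]
    · refine Or.inl (Or.inr ?_)
      rw [key]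
      constructor
      · have hQ : -(π / 4) < (-π + x * (3 - x) * φ) / (2 * (x + 1)) := by
          rw [lt_div_iff₀ h2x1]
          nlinarith [mul_nonneg (by linarith : (0:ℝ) ≤ π - φ * (4 * x))
              (by linarith : (0:ℝ) ≤ x - 3),
            mul_nonneg hlo hx0.le, pi_pos]
        linarith
      · have hQ : (-π + x * (3 - x) * φ) / (2 * (x + 1)) < 0 := by
          apply div_neg_of_neg_of_pos _ h2x1
          nlinarith [mul_nonneg hlo hx0.le, pi_pos]
        linarith
  · -- N % 8 = 0 : θ* = 3π/2 + π/(2(x+1)), φ* = -π/(4x)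
    have hx8 : (8:ℝ) ≤ x := by
      rw [hxdef]
      exact_mod_cast (by omega : 8 ≤ N)
    have htv : tval N = 3 * x / 4 + 1 := by simp [tval, hmod, hxdef]
    have hθ : thetaStar N = 3 * π / 2 + π / (2 * (x + 1)) := by
      rw [thetaStar, htv]; field_simp; ring
    have hsin : sin (2 * thetaStar N) < 0 := by
      have h2θ : 2 * thetaStar N = (π / (x + 1) + π) + 2 * π := by
        rw [hθ]; field_simp; ring
      rw [h2θ, Real.sin_add_two_pi, Real.sin_add_pi]; linarith
    have hφs : φstar = -(π / (4 * x)) := by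
      rw [hφstar, Real.sign_of_neg hsin]; ring
    have hφsneg : φstar ≤ 0 := by
      have : 0 ≤ π / (4 * x) := le_of_lt (div_pos pi_pos h40)
      rw [hφs]; linarith
    rw [Set.uIcc_of_ge hφsneg] at hφ
    obtain ⟨hlo, hhi⟩ := hφ
    have h4 : -π ≤ φ * (4 * x) := by
      have : -π / (4 * x) ≤ φ := by rw [neg_div, ← hφs]; exact hlo
      exact (div_le_iff₀ h40).mp this
    have key : ((x - 1) / (x + 1)) * φ + thetaStar N - ((x - 2) / 2) * φ
        = 3 * π / 2 + (π + x * (3 - x) * φ) / (2 * (x + 1)) := by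
      rw [hθ]; field_simp; ring
    refine Or.inl ⟨⟨?_, ?_⟩, ?_⟩
    · nlinarith [pi_pos]
    · nlinarith [pi_pos, mul_nonneg (neg_nonneg.mpr hhi) hx0.le]
    · refine Or.inr ?_
      rw [key]
      constructor
      · have hQ : 0 < π + x * (3 - x) * φ := by
          nlinarith [h4, mul_nonneg (mul_nonneg hx0.le hx0.le) (neg_nonneg.mpr hhi)]
        have := div_pos hQ h2x1
        linarith
      · have hQ : (π + x * (3 - x) * φ) / (2 * (x + 1)) < π / 4 := by
          rw [div_lt_iff₀ h2x1]
          nlinarith [mul_nonneg (by linarith : (0:ℝ) ≤ π + φ * (4 * x))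
              (by linarith : (0:ℝ) ≤ x - 2),
            mul_nonneg (neg_nonneg.mpr hhi) hx0.le, pi_pos]
        linarith
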